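/- Let f : ℝ → ℝ be a real analytic even function (f(−x) = f(x) for all x) such that there is a constant a with 0 ≤ a < 1 and |f′(x)| ≤ a for all x ∈ ℝ. Then there exists a strictly decreasing function φ : ℝ → ℝ such that: (1) x + φ(x) = f(x − φ(x)) for every x ∈ ℝ; (2) for every x, y ∈ ℝ, if x + y = f(x − y) then y = φ(x) (uniqueness); and (3) φ(φ(x)) = x for every x ∈ ℝ. -/
import Mathlib


open Filter Topology

/-- For a real analytic even function `f` with `|f′| ≤ a < 1`, the equation
`x + y = f(x − y)` implicitly defines a strictly decreasing function `y = φ(x)` on `ℝ`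
satisfying `φ(φ(x)) = x`. -/
theorem stmt16 (f : ℝ → ℝ)
    (hanal : AnalyticOnNhd ℝ f Set.univ)
    (heven : ∀ x : ℝ, f (-x) = f x)
    (a : ℝ) (ha0 : 0 ≤ a) (ha1 : a < 1)
    (hbound : ∀ x : ℝ, |deriv f x| ≤ a) :
    ∃ φ : ℝ → ℝ, StrictAnti φ ∧
      (∀ x : ℝ, x + φ x = f (x - φ x)) ∧
      (∀ x y : ℝ, x + y = f (x - y) → y = φ x) ∧
      (∀ x : ℝ, φ (φ x) = x) := by
  have hdiff : Differentiable ℝ f := fun x => (hanal x trivial).differentiableAt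
  have hlip : LipschitzWith a.toNNReal f := by
    apply lipschitzWith_of_nnnorm_deriv_le hdiff
    intro x
    rw [← NNReal.coe_le_coe, coe_nnnorm, Real.coe_toNNReal _ ha0]
    simpa using hbound x
  have hlipd : ∀ u v : ℝ, |f u - f v| ≤ a * |u - v| := by
    intro u v
    have := hlip.dist_le_mul u v
    simpa [Real.dist_eq, Real.coe_toNNReal _ ha0] using this
  -- contraction for each x
  have hc : ∀ x : ℝ, ContractingWith a.toNNReal (fun y => f (x - y) - x) := by
    intro x
    constructor
    · rwa [← NNReal.coe_lt_coe, Real.coe_toNNReal _ ha0]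
    · apply LipschitzWith.of_dist_le_mul
      intro y₁ y₂
      have hab : |y₁ - y₂| = |(x - y₁) - (x - y₂)| := by rw [abs_sub_comm]; ring_nf
      calc dist (f (x - y₁) - x) (f (x - y₂) - x) = |f (x - y₁) - f (x - y₂)| := by
            rw [Real.dist_eq]; ring_nf
        _ ≤ a * |(x - y₁) - (x - y₂)| := hlipd _ _
        _ = ↑a.toNNReal * dist y₁ y₂ := by
            rw [Real.coe_toNNReal _ ha0, Real.dist_eq, hab]
  set φ : ℝ → ℝ := fun x => (hc x).fixedPoint _ with hφ
  -- the defining equation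
  have hfix : ∀ x : ℝ, x + φ x = f (x - φ x) := by
    intro x
    have := (hc x).fixedPoint_isFixedPt
    simp only [Function.IsFixedPt] at this
    simp only [hφ]
    linarith [this]
  have huniq : ∀ x y : ℝ, x + y = f (x - y) → y = φ x := by
    intro x y h
    exact (hc x).fixedPoint_unique (by simp only [Function.IsFixedPt]; linarith)
  have hanti : StrictAnti φ := by
    intro x₁ x₂ hx
    by_contra h
    push_neg at h
    have h1 := hfix x₁
    have h2 := hfix x₂
    have hd := hlipd (x₂ - φ x₂) (x₁ - φ x₁)
    have habs : |(x₂ - φ x₂) - (x₁ - φ x₁)| ≤ (x₂ - x₁) + (φ x₂ - φ x₁) := by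
      rw [abs_le]; constructor <;> nlinarith [abs_nonneg ((x₂ - φ x₂) - (x₁ - φ x₁))]
    have : (x₂ - x₁) + (φ x₂ - φ x₁) = f (x₂ - φ x₂) - f (x₁ - φ x₁) := by linarith
    have hle : (x₂ - x₁) + (φ x₂ - φ x₁) ≤ a * ((x₂ - x₁) + (φ x₂ - φ x₁)) := by
      calc (x₂ - x₁) + (φ x₂ - φ x₁) = f (x₂ - φ x₂) - f (x₁ - φ x₁) := this
        _ ≤ |f (x₂ - φ x₂) - f (x₁ - φ x₁)| := le_abs_self _
        _ ≤ a * |(x₂ - φ x₂) - (x₁ - φ x₁)| := hd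
        _ ≤ a * ((x₂ - x₁) + (φ x₂ - φ x₁)) := by
            apply mul_le_mul_of_nonneg_left habs ha0
    nlinarith
  refine ⟨φ, hanti, hfix, huniq, fun x => ?_⟩
  have : φ x + x = f (φ x - x) := by
    have := hfix x
    rw [show φ x - x = -(x - φ x) by ring, heven]
    linarith
  exact (huniq (φ x) x this).symm
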